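/- Let F_1, F_2 be the coupled diffusion–convection operators defined in the context, with arbitrary real parameters, and let A_{s,i}, B_{s,i} ∈ ℝ (s = 1,2; i = 1,2,3,4). Define μ_s = h_{s0}A_{2,4} + d_{s0}A_{1,4}, ν_s = h_{s0}B_{2,4} + d_{s0}B_{1,4}, γ_s = g_{s0}A_{2,4} + η_{s0}A_{1,4}, κ_s = g_{s0}B_{2,4} + η_{s0}B_{1,4}, l_s = g_{s0}A_{2,2} + h_{s0}A_{2,3} + d_{s0}A_{1,3} + η_{s0}A_{1,2}, ς_s = g_{s0}B_{2,2} + h_{s0}B_{2,3} + d_{s0}B_{1,3} + η_{s0}B_{1,2}, ρ_{s,1} = d_{s0}γ_1 + η_{s0}μ_1, ρ_{s,2} = g_{s0}μ_2 + h_{s0}γ_2, λ_{s,1} = d_{s0}κ_1 + η_{s0}ν_1, λ_{s,2} = g_{s0}ν_2 + h_{s0}κ_2. Set δ_{s,1}(t) = A_{s,1} + B_{s,1}t + l_s t²/2 + ς_s t³/6 + (ρ_{s,1}+ρ_{s,2})t⁴/24 + (λ_{s,1}+λ_{s,2})t⁵/120, δ_{s,2}(t) = A_{s,2} + B_{s,2}t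 + μ_s t²/2 + ν_s t³/6, δ_{s,3}(t) = A_{s,3} + B_{s,3}t + γ_s t²/2 + κ_s t³/6, δ_{s,4}(t) = A_{s,4} + B_{s,4}t. Then u_s(x_1,x_2,t) = δ_{s,1}(t) + δ_{s,2}(t)x_1 + δ_{s,3}(t)x_2 + δ_{s,4}(t)x_1x_2 satisfies, for all (x_1,x_2,t) ∈ ℝ³ and s = 1,2, ∂²u_s/∂t²(x_1,x_2,t) = F_s(u_1(·,·,t), u_2(·,·,t))(x_1,x_2), with u_s(x_1,x_2,0) = A_{s,1}+A_{s,2}x_1+A_{s,3}x_2+A_{s,4}x_1x_2 and ∂u_s/∂t(x_1,x_2,0) = B_{s,1}+B_{s,2}x_1+B_{s,3}x_2+B_{s,4}x_1x_2. -/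
import Mathlib


/-- Partial derivative in the first variable of a function `ℝ → ℝ → ℝ`. -/
noncomputable def pd1 (u : ℝ → ℝ → ℝ) : ℝ → ℝ → ℝ := fun x1 x2 => deriv (fun y => u y x2) x1

/-- Partial derivative in the second variable of a function `ℝ → ℝ → ℝ`. -/
noncomputable def pd2 (u : ℝ → ℝ → ℝ) : ℝ → ℝ → ℝ := fun x1 x2 => deriv (fun y => u x1 y) x2

/-- The coupled diffusion–convection operator `F_s`. -/
noncomputable def Fop (k0 q0 q1 p0 c0 c1 e0 g0 d0 h0 : ℝ) (u1 u2 : ℝ → ℝ → ℝ) : ℝ → ℝ → ℝ :=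
  fun x1 x2 =>
    pd1 (fun a b => (k0 - q1 * u2 a b) * pd1 u1 a b + (q1 * u1 a b + q0) * pd1 u2 a b) x1 x2 +
    pd2 (fun a b => (p0 - c1 * u2 a b) * pd2 u1 a b + (c1 * u1 a b + c0) * pd2 u2 a b) x1 x2 +
    e0 * pd1 u1 x1 x2 + g0 * pd1 u2 x1 x2 + d0 * pd2 u1 x1 x2 + h0 * pd2 u2 x1 x2

lemma deriv_affine (a b t : ℝ) : deriv (fun y : ℝ => a + b * y) t = b := by
  have H : HasDerivAt (fun y : ℝ => a + b * y) (b * 1) t :=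
    (hasDerivAt_id' (x := t)).const_mul b |>.const_add a
  simpa using H.deriv

lemma dpoly5 (c0 c1 c2 c3 c4 c5 : ℝ) :
    deriv (fun t : ℝ => c0 + c1 * t + c2 * t ^ 2 / 2 + c3 * t ^ 3 / 6 + c4 * t ^ 4 / 24
      + c5 * t ^ 5 / 120)
    = fun t => c1 + c2 * t + c3 * t ^ 2 / 2 + c4 * t ^ 3 / 6 + c5 * t ^ 4 / 24 := by
  funext t
  have H : HasDerivAt (fun t : ℝ => c0 + c1 * t + c2 * t ^ 2 / 2 + c3 * t ^ 3 / 6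
      + c4 * t ^ 4 / 24 + c5 * t ^ 5 / 120)
      (0 + c1 * 1 + c2 * (2 * t ^ 1) / 2 + c3 * (3 * t ^ 2) / 6 + c4 * (4 * t ^ 3) / 24
       + c5 * (5 * t ^ 4) / 120) t :=
    ((((((hasDerivAt_const t c0).add ((hasDerivAt_id' (x := t)).const_mul c1)).add
      (((hasDerivAt_pow 2 t).const_mul c2).div_const 2)).add
      (((hasDerivAt_pow 3 t).const_mul c3).div_const 6)).add
      (((hasDerivAt_pow 4 t).const_mul c4).div_const 24)).add
      (((hasDerivAt_pow 5 t).const_mul c5).div_const 120))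
  rw [H.deriv]; ring

lemma dpoly4 (c1 c2 c3 c4 c5 t : ℝ) :
    deriv (fun t : ℝ => c1 + c2 * t + c3 * t ^ 2 / 2 + c4 * t ^ 3 / 6 + c5 * t ^ 4 / 24) t
    = c2 + c3 * t + c4 * t ^ 2 / 2 + c5 * t ^ 3 / 6 := by
  have H : HasDerivAt (fun t : ℝ => c1 + c2 * t + c3 * t ^ 2 / 2 + c4 * t ^ 3 / 6
      + c5 * t ^ 4 / 24)
      (0 + c2 * 1 + c3 * (2 * t ^ 1) / 2 + c4 * (3 * t ^ 2) / 6 + c5 * (4 * t ^ 3) / 24) t :=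
    (((((hasDerivAt_const t c1).add ((hasDerivAt_id' (x := t)).const_mul c2)).add
      (((hasDerivAt_pow 2 t).const_mul c3).div_const 2)).add
      (((hasDerivAt_pow 3 t).const_mul c4).div_const 6)).add
      (((hasDerivAt_pow 4 t).const_mul c5).div_const 24))
  rw [H.deriv]; ring

/-- The analytical solution of Example 3.1 for the wave case α₁ = α₂ = 2. -/
theorem stmt_7 (k0 q0 q1 p0 c0 c1 η g d h : Fin 2 → ℝ) (A B : Fin 2 → Fin 4 → ℝ)
    (μ ν γ κ l ς ρ1 ρ2 lam1 lam2 : Fin 2 → ℝ)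
    (hμ : ∀ s, μ s = h s * A 1 3 + d s * A 0 3)
    (hν : ∀ s, ν s = h s * B 1 3 + d s * B 0 3)
    (hγ : ∀ s, γ s = g s * A 1 3 + η s * A 0 3)
    (hκ : ∀ s, κ s = g s * B 1 3 + η s * B 0 3)
    (hl : ∀ s, l s = g s * A 1 1 + h s * A 1 2 + d s * A 0 2 + η s * A 0 1)
    (hς : ∀ s, ς s = g s * B 1 1 + h s * B 1 2 + d s * B 0 2 + η s * B 0 1)
    (hρ1 : ∀ s, ρ1 s = d s * γ 0 + η s * μ 0)
    (hρ2 : ∀ s, ρ2 s = g s * μ 1 + h s * γ 1)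
    (hlam1 : ∀ s, lam1 s = d s * κ 0 + η s * ν 0)
    (hlam2 : ∀ s, lam2 s = g s * ν 1 + h s * κ 1)
    (δ : Fin 2 → Fin 4 → ℝ → ℝ)
    (hδ1 : ∀ s t, δ s 0 t = A s 0 + B s 0 * t + l s * t ^ 2 / 2 + ς s * t ^ 3 / 6 +
      (ρ1 s + ρ2 s) * t ^ 4 / 24 + (lam1 s + lam2 s) * t ^ 5 / 120)
    (hδ2 : ∀ s t, δ s 1 t = A s 1 + B s 1 * t + μ s * t ^ 2 / 2 + ν s * t ^ 3 / 6)
    (hδ3 : ∀ s t, δ s 2 t = A s 2 + B s 2 * t + γ s * t ^ 2 / 2 + κ s * t ^ 3 / 6)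
    (hδ4 : ∀ s t, δ s 3 t = A s 3 + B s 3 * t)
    (u : Fin 2 → ℝ → ℝ → ℝ → ℝ)
    (hu : ∀ s x1 x2 t, u s x1 x2 t =
      δ s 0 t + δ s 1 t * x1 + δ s 2 t * x2 + δ s 3 t * x1 * x2) :
    ∀ (s : Fin 2) (x1 x2 t : ℝ),
      (deriv (fun τ => deriv (fun σ => u s x1 x2 σ) τ) t =
        Fop (k0 s) (q0 s) (q1 s) (p0 s) (c0 s) (c1 s) (η s) (g s) (d s) (h s)
          (fun a b => u 0 a b t) (fun a b => u 1 a b t) x1 x2) ∧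
      u s x1 x2 0 = A s 0 + A s 1 * x1 + A s 2 * x2 + A s 3 * x1 * x2 ∧
      deriv (fun σ => u s x1 x2 σ) 0 = B s 0 + B s 1 * x1 + B s 2 * x2 + B s 3 * x1 * x2 := by
  intro s x1 x2 t
  have hU : (fun σ => u s x1 x2 σ) = fun σ =>
      (A s 0 + A s 1 * x1 + A s 2 * x2 + A s 3 * x1 * x2)
      + (B s 0 + B s 1 * x1 + B s 2 * x2 + B s 3 * x1 * x2) * σ
      + (l s + μ s * x1 + γ s * x2) * σ ^ 2 / 2
      + (ς s + ν s * x1 + κ s * x2) * σ ^ 3 / 6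
      + (ρ1 s + ρ2 s) * σ ^ 4 / 24
      + (lam1 s + lam2 s) * σ ^ 5 / 120 := by
    funext σ; rw [hu, hδ1, hδ2, hδ3, hδ4]; ring
  have hd1 : ∀ (s' : Fin 2) (a b : ℝ), deriv (fun y => u s' y b t) a
      = δ s' 1 t + δ s' 3 t * b := by
    intro s' a b
    have hfun : (fun y => u s' y b t)
        = fun y => (δ s' 0 t + δ s' 2 t * b) + (δ s' 1 t + δ s' 3 t * b) * y := by
      funext y; rw [hu]; ring
    rw [hfun, deriv_affine]
  have hd2 : ∀ (s' : Fin 2) (a b : ℝ), deriv (fun y => u s' a y t) b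
      = δ s' 2 t + δ s' 3 t * a := by
    intro s' a b
    have hfun : (fun y => u s' a y t)
        = fun y => (δ s' 0 t + δ s' 1 t * a) + (δ s' 2 t + δ s' 3 t * a) * y := by
      funext y; rw [hu]; ring
    rw [hfun, deriv_affine]
  refine ⟨?_, by rw [hu, hδ1, hδ2, hδ3, hδ4]; ring, ?_⟩
  · have hF : Fop (k0 s) (q0 s) (q1 s) (p0 s) (c0 s) (c1 s) (η s) (g s) (d s) (h s)
        (fun a b => u 0 a b t) (fun a b => u 1 a b t) x1 x2
        = η s * (δ 0 1 t + δ 0 3 t * x2) + g s * (δ 1 1 t + δ 1 3 t * x2)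
          + d s * (δ 0 2 t + δ 0 3 t * x1) + h s * (δ 1 2 t + δ 1 3 t * x1) := by
      have hT1 : (fun y => (k0 s - q1 s * u 1 y x2 t) * deriv (fun y' => u 0 y' x2 t) y
            + (q1 s * u 0 y x2 t + q0 s) * deriv (fun y' => u 1 y' x2 t) y)
          = fun _ : ℝ => (k0 s - q1 s * (δ 1 0 t + δ 1 2 t * x2)) * (δ 0 1 t + δ 0 3 t * x2)
            + (q1 s * (δ 0 0 t + δ 0 2 t * x2) + q0 s) * (δ 1 1 t + δ 1 3 t * x2) := by
        funext y; rw [hd1, hd1, hu, hu]; ring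
      have hT2 : (fun y => (p0 s - c1 s * u 1 x1 y t) * deriv (fun y' => u 0 x1 y' t) y
            + (c1 s * u 0 x1 y t + c0 s) * deriv (fun y' => u 1 x1 y' t) y)
          = fun _ : ℝ => (p0 s - c1 s * (δ 1 0 t + δ 1 1 t * x1)) * (δ 0 2 t + δ 0 3 t * x1)
            + (c1 s * (δ 0 0 t + δ 0 1 t * x1) + c0 s) * (δ 1 2 t + δ 1 3 t * x1) := by
        funext y; rw [hd2, hd2, hu, hu]; ring
      show deriv (fun y => (k0 s - q1 s * u 1 y x2 t) * deriv (fun y' => u 0 y' x2 t) y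
            + (q1 s * u 0 y x2 t + q0 s) * deriv (fun y' => u 1 y' x2 t) y) x1
        + deriv (fun y => (p0 s - c1 s * u 1 x1 y t) * deriv (fun y' => u 0 x1 y' t) y
            + (c1 s * u 0 x1 y t + c0 s) * deriv (fun y' => u 1 x1 y' t) y) x2
        + η s * deriv (fun y => u 0 y x2 t) x1 + g s * deriv (fun y => u 1 y x2 t) x1
        + d s * deriv (fun y => u 0 x1 y t) x2 + h s * deriv (fun y => u 1 x1 y t) x2 = _
      rw [hT1, hT2, deriv_const, deriv_const, hd1, hd1, hd2, hd2]
      ring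
    rw [hU, dpoly5]
    simp only []
    rw [dpoly4, hF, hδ2, hδ2, hδ3, hδ3, hδ4, hδ4,
      hl s, hς s, hμ s, hν s, hγ s, hκ s, hρ1 s, hρ2 s, hlam1 s, hlam2 s,
      hμ 0, hν 0, hγ 0, hκ 0, hμ 1, hν 1, hγ 1, hκ 1]
    ring
  · rw [hU, dpoly5]
    simp only []
    ring
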